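/- arXiv:cs/0207026 — 2 statements merged into one kernel-verified Lean document; each statement's English description precedes it below -/
import Mathlib

section
/- Let A be a sequence of pairs (a_k, w_k) with w_k > 0, and for each index i let p[i] be the unique index such that A(i, p[i]) is the first (leftmost) block of the decreasingly right-skew partition of A(i, n). Then there do not exist indices k and m with k < m ≤ p[k] < p[m]. -/
noncomputable def density (a w : ℕ → ℝ) (i j : ℕ) : ℝ :=
  (∑ t ∈ Finset.Icc i j, a t) / (∑ t ∈ Finset.Icc i j, w t)

def RightSkew (a w : ℕ → ℝ) (i k : ℕ) : Prop :=
  ∀ j, i ≤ j → j < k → density a w i j ≤ density a w (j + 1) k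

def IsDRSP (a w : ℕ → ℝ) (x y : ℕ) (segs : List (ℕ × ℕ)) : Prop :=
  segs ≠ [] ∧
  segs.head?.map Prod.fst = some x ∧
  segs.getLast?.map Prod.snd = some y ∧
  (∀ s ∈ segs, s.1 ≤ s.2 ∧ RightSkew a w s.1 s.2) ∧
  segs.Chain' (fun s t => t.1 = s.2 + 1 ∧ density a w t.1 t.2 < density a w s.1 s.2)

/-- sum over Icc splits at r -/
lemma Icc_sum_split (f : ℕ → ℝ) {i r j : ℕ} (h1 : i ≤ r) (h2 : r < j) :
    ∑ t ∈ Finset.Icc i j, f t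
      = (∑ t ∈ Finset.Icc i r, f t) + ∑ t ∈ Finset.Icc (r+1) j, f t := by
  rw [← Finset.Ico_add_one_right_eq_Icc, ← Finset.Ico_add_one_right_eq_Icc, ← Finset.Ico_add_one_right_eq_Icc]
  rw [Finset.sum_Ico_consecutive f (by omega : i ≤ r + 1) (by omega : r + 1 ≤ j + 1)]

lemma wsum_pos (w : ℕ → ℝ) (hw : ∀ t, 0 < w t) {i j : ℕ} (h : i ≤ j) :
    0 < ∑ t ∈ Finset.Icc i j, w t :=
  Finset.sum_pos (fun t _ => hw t) (Finset.nonempty_Icc.mpr h)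

lemma avg_lt {a1 w1 a2 w2 d : ℝ} (h1 : 0 < w1) (h2 : 0 < w2)
    (ha : a1 / w1 < d) (hb : a2 / w2 < d) : (a1 + a2) / (w1 + w2) < d := by
  rw [div_lt_iff₀ (by linarith)]
  rw [div_lt_iff₀ h1] at ha
  rw [div_lt_iff₀ h2] at hb
  nlinarith

lemma mediant_le_right {a1 w1 a2 w2 : ℝ} (h1 : 0 < w1) (h2 : 0 < w2)
    (h : a1 / w1 ≤ a2 / w2) : (a1 + a2) / (w1 + w2) ≤ a2 / w2 := by
  rw [div_le_div_iff₀ (by linarith) h2]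
  rw [div_le_div_iff₀ h1 h2] at h
  nlinarith

lemma left_le_mediant {a1 w1 a2 w2 : ℝ} (h1 : 0 < w1) (h2 : 0 < w2)
    (h : a1 / w1 ≤ a2 / w2) : a1 / w1 ≤ (a1 + a2) / (w1 + w2) := by
  rw [div_le_div_iff₀ h1 (by linarith)]
  rw [div_le_div_iff₀ h1 h2] at h
  nlinarith

/-- density over a split interval is the mediant -/
lemma density_split (a w : ℕ → ℝ) {i r j : ℕ} (h1 : i ≤ r) (h2 : r < j) :
    density a w i j
      = ((∑ t ∈ Finset.Icc i r, a t) + ∑ t ∈ Finset.Icc (r+1) j, a t) /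
        ((∑ t ∈ Finset.Icc i r, w t) + ∑ t ∈ Finset.Icc (r+1) j, w t) := by
  unfold density
  rw [Icc_sum_split a h1 h2, Icc_sum_split w h1 h2]

/-- prefix of a right-skew segment has density ≤ that of the segment -/
lemma prefix_le (a w : ℕ → ℝ) (hw : ∀ t, 0 < w t) {l y r : ℕ}
    (hly : l ≤ y) (hyr : y < r) (hrs : RightSkew a w l r) :
    density a w l y ≤ density a w l r := by
  have h := hrs y hly hyr
  rw [density_split a w hly hyr]
  exact left_le_mediant (wsum_pos w hw hly) (wsum_pos w hw (by omega)) h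

/-- core: every element of a chain after head has density < head's -/
lemma chain_density_lt (a w : ℕ → ℝ) :
    ∀ (segs : List (ℕ × ℕ)) (hd : ℕ × ℕ),
    (hd :: segs).Chain'
      (fun s t => t.1 = s.2 + 1 ∧ density a w t.1 t.2 < density a w s.1 s.2) →
    ∀ s ∈ segs, density a w s.1 s.2 < density a w hd.1 hd.2 := by
  intro segs
  induction segs with
  | nil => intro hd _ s hs; simp at hs
  | cons b rest ih =>
    intro hd hch s hs
    rw [List.Chain', List.isChain_cons_cons] at hch
    rw [List.mem_cons] at hs
    rcases hs with rfl | hs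
    · exact hch.1.2
    · exact lt_trans (ih b hch.2 s hs) hch.1.2

/-- head's end is at most the last end in a chain of consecutive blocks -/
lemma head_snd_le_last (a w : ℕ → ℝ) :
    ∀ (segs : List (ℕ × ℕ)) (hd : ℕ × ℕ) (n : ℕ),
    (∀ s ∈ hd :: segs, s.1 ≤ s.2) →
    (hd :: segs).Chain'
      (fun s t => t.1 = s.2 + 1 ∧ density a w t.1 t.2 < density a w s.1 s.2) →
    ((hd :: segs).getLast?).map Prod.snd = some n →
    hd.2 ≤ n := by
  intro segs
  induction segs with
  | nil => intro hd n _ _ hl; simp at hl; omega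
  | cons b rest ih =>
    intro hd n hle hch hl
    rw [List.Chain', List.isChain_cons_cons] at hch
    have h1 : b.1 = hd.2 + 1 := hch.1.1
    have h2 : b.1 ≤ b.2 := hle b (by simp)
    have h3 : b.2 ≤ n := by
      apply ih b n (fun s hs => hle s (by simp at hs ⊢; tauto)) hch.2
      rw [List.getLast?_cons_cons] at hl
      exact hl
    omega

/-- core: density of a prefix of a chain of right-skew blocks, all with density < d,
    is < d -/
lemma prefix_density_lt (a w : ℕ → ℝ) (hw : ∀ t, 0 < w t) (d : ℝ) :
    ∀ (segs : List (ℕ × ℕ)) (x y : ℕ),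
    segs.head?.map Prod.fst = some x →
    (∀ s ∈ segs, s.1 ≤ s.2 ∧ RightSkew a w s.1 s.2) →
    segs.Chain'
      (fun s t => t.1 = s.2 + 1 ∧ density a w t.1 t.2 < density a w s.1 s.2) →
    (∀ s ∈ segs, density a w s.1 s.2 < d) →
    x ≤ y → (∃ s ∈ segs, y ≤ s.2) →
    density a w x y < d := by
  intro segs
  induction segs with
  | nil => intro x y hx; simp at hx
  | cons b rest ih =>
    intro x y hx hrs hch hd hxy hcov
    have hxb : b.1 = x := by simp at hx; exact hx
    have hb := hrs b (by simp)
    by_cases hyb : y ≤ b.2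
    · rcases eq_or_lt_of_le hyb with rfl | hylt
      · have := hd b (by simp)
        rw [← hxb]; exact this
      · have hle : density a w x y ≤ density a w b.1 b.2 := by
          rw [← hxb]
          exact prefix_le a w hw (hxb ▸ hxy) hylt hb.2
        exact lt_of_le_of_lt hle (hd b (by simp))
    · push_neg at hyb
      -- y > b.2, so the covering witness is in rest
      have hrest_ne : rest ≠ [] := by
        rcases hcov with ⟨s, hs, hys⟩
        rw [List.mem_cons] at hs
        rcases hs with rfl | hs
        · omega
        · intro h; rw [h] at hs; simp at hs
      obtain ⟨c, rest', rfl⟩ := List.exists_cons_of_ne_nil hrest_ne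
      rw [List.Chain', List.isChain_cons_cons] at hch
      have hc1 : c.1 = b.2 + 1 := hch.1.1
      have hrec : density a w (b.2 + 1) y < d := by
        apply ih (b.2 + 1) y
        · simp [hc1]
        · intro s hs; exact hrs s (by simp [hs])
        · exact hch.2
        · intro s hs; exact hd s (by simp [hs])
        · omega
        · rcases hcov with ⟨s, hs, hys⟩
          rw [List.mem_cons] at hs
          rcases hs with rfl | hs
          · omega
          · exact ⟨s, hs, hys⟩
      have hb2 : density a w x b.2 < d := by
        have := hd b (by simp)
        rw [hxb] at this; exact this
      have hxb2 : x ≤ b.2 := by omega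
      rw [density_split a w hxb2 hyb]
      exact avg_lt (wsum_pos w hw hxb2) (wsum_pos w hw (by omega))
        (by unfold density at hb2; exact hb2)
        (by unfold density at hrec; exact hrec)

theorem rightSkew_pointers_no_crossing (a w : ℕ → ℝ) (hw : ∀ t, 0 < w t)
    (n : ℕ) (p : ℕ → ℕ)
    (hp : ∀ i, 1 ≤ i → i ≤ n →
      ∃ segs : List (ℕ × ℕ), IsDRSP a w i n segs ∧ segs.head? = some (i, p i)) :
    ∀ k m, 1 ≤ k → k < m → m ≤ n → ¬ (m ≤ p k ∧ p k < p m) := by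
  intro k m hk hkm hmn ⟨hmpk, hpkpm⟩
  obtain ⟨segsk, ⟨hkne, hkhd, hklast, hkrs, hkch⟩, hkhd'⟩ :=
    hp k hk (by omega)
  obtain ⟨segsm, ⟨hmne, hmhd, hmlast, hmrs, hmch⟩, hmhd'⟩ :=
    hp m (by omega) hmn
  -- segsk = (k, p k) :: restk
  rcases segsk with _ | ⟨bk, restk⟩
  · exact absurd rfl hkne
  have hbk : bk = (k, p k) := by simpa using hkhd'
  subst hbk
  -- first block of segsm is (m, p m), right-skew
  have hmm : (m, p m) ∈ segsm := by
    rcases segsm with _ | ⟨bm, restm⟩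
    · exact absurd rfl hmne
    · have : bm = (m, p m) := by simpa using hmhd'
      simp [this]
  have hrsm : RightSkew a w m (p m) := (hmrs _ hmm).2
  have hpmn : p m ≤ n := by
    rcases segsm with _ | ⟨bm, restm⟩
    · exact absurd rfl hmne
    have hbm : bm = (m, p m) := by simpa using hmhd'
    subst hbm
    have := head_snd_le_last a w restm (m, p m) n
      (fun s hs => (hmrs s hs).1) hmch hmlast
    simpa using this
  have hrsk : RightSkew a w k (p k) := (hkrs (k, p k) (by simp)).2
  -- μ(m, p k) ≤ μ(p k + 1, p m)
  have h1 : density a w m (p k) ≤ density a w (p k + 1) (p m) :=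
    hrsm (p k) hmpk hpkpm
  -- μ(k, p k) ≤ μ(m, p k)
  have h2 : density a w k (p k) ≤ density a w m (p k) := by
    have h3 := hrsk (m - 1) (by omega) (by omega)
    have hm1 : m - 1 + 1 = m := by omega
    rw [hm1] at h3
    have := density_split a w (show k ≤ m - 1 by omega) (show m - 1 < p k by omega)
    rw [hm1] at this
    rw [this]
    exact mediant_le_right (wsum_pos w hw (by omega : k ≤ m - 1))
      (wsum_pos w hw hmpk) h3
  -- thus μ(k, p k) ≤ μ(p k + 1, p m)
  have hkey : density a w k (p k) ≤ density a w (p k + 1) (p m) :=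
    le_trans h2 h1
  -- restk is nonempty: getLast snd = n > p k
  have hrestk_ne : restk ≠ [] := by
    intro h
    subst h
    simp at hklast
    omega
  rcases restk with _ | ⟨ck, restk'⟩
  · exact absurd rfl hrestk_ne
  rw [List.Chain', List.isChain_cons_cons] at hkch
  have hck1 : ck.1 = p k + 1 := hkch.1.1
  -- all densities in ck :: restk' are < μ(k, p k)
  have hdlt : ∀ s ∈ ck :: restk', density a w s.1 s.2 < density a w k (p k) := by
    have := chain_density_lt a w (ck :: restk') (k, p k)
      (List.isChain_cons_cons.mpr ⟨hkch.1, hkch.2⟩)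
    simpa using this
  -- p m ≤ last end = n
  have hlast : ∃ s ∈ ck :: restk', p m ≤ s.2 := by
    have hne : (ck :: restk') ≠ [] := by simp
    refine ⟨(ck :: restk').getLast hne, List.getLast_mem hne, ?_⟩
    have : ((k, p k) :: ck :: restk').getLast? =
        ((k, p k) :: ck :: restk').getLast (by simp) := by
      rw [List.getLast?_eq_getLast]
    rw [this] at hklast
    rw [List.getLast_cons (by simp : (ck :: restk') ≠ [])] at hklast
    simp at hklast
    -- hklast : ((ck :: restk').getLast _).2 = n
    omega
  have hcontr : density a w (p k + 1) (p m) < density a w k (p k) := by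
    apply prefix_density_lt a w hw (density a w k (p k)) (ck :: restk') (p k + 1) (p m)
    · simp [hck1]
    · intro s hs; exact hkrs s (by simp [hs])
    · exact hkch.2
    · exact hdlt
    · omega
    · exact hlast
  linarith
end

section
/- Let A be a sequence of pairs (a_k, w_k) with w_k > 0. For each i, A(i, p[i]) is the first block of the decreasingly right-skew partition of A(i, n) if and only if A(i, p[i]) is the longest right-skew segment starting at index i. -/
section helpers
variable (a w : ℕ → ℝ)

lemma Wpos (hw : ∀ t, 0 < w t) {i j : ℕ} (h : i ≤ j) :
    0 < ∑ t ∈ Finset.Icc i j, w t :=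
  Finset.sum_pos (fun t _ => hw t) (Finset.nonempty_Icc.2 h)

lemma sum_split (f : ℕ → ℝ) {i j k : ℕ} (hij : i ≤ j) (hjk : j < k) :
    ∑ t ∈ Finset.Icc i k, f t
      = (∑ t ∈ Finset.Icc i j, f t) + ∑ t ∈ Finset.Icc (j+1) k, f t := by
  rw [← Finset.Ico_add_one_right_eq_Icc, ← Finset.Ico_add_one_right_eq_Icc, ← Finset.Ico_add_one_right_eq_Icc]
  rw [← Finset.sum_Ico_consecutive f (by omega : i ≤ j+1) (by omega : j+1 ≤ k+1)]

lemma mediant_le {x1 w1 x2 w2 c : ℝ} (h1 : 0 < w1) (h2 : 0 < w2)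
    (hx1 : x1/w1 ≤ c) (hx2 : x2/w2 ≤ c) : (x1+x2)/(w1+w2) ≤ c := by
  rw [div_le_iff₀ h1] at hx1
  rw [div_le_iff₀ h2] at hx2
  rw [div_le_iff₀ (by linarith)]
  nlinarith

lemma mediant_lt {x1 w1 x2 w2 c : ℝ} (h1 : 0 < w1) (h2 : 0 < w2)
    (hx1 : x1/w1 < c) (hx2 : x2/w2 < c) : (x1+x2)/(w1+w2) < c := by
  rw [div_lt_iff₀ h1] at hx1
  rw [div_lt_iff₀ h2] at hx2
  rw [div_lt_iff₀ (by linarith)]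
  nlinarith

lemma mediant_ge {x1 w1 x2 w2 c : ℝ} (h1 : 0 < w1) (h2 : 0 < w2)
    (hx1 : c ≤ x1/w1) (hx2 : c ≤ x2/w2) : c ≤ (x1+x2)/(w1+w2) := by
  rw [le_div_iff₀ h1] at hx1
  rw [le_div_iff₀ h2] at hx2
  rw [le_div_iff₀ (by linarith)]
  nlinarith

lemma density_split_le (hw : ∀ t, 0 < w t) {i j k : ℕ} {c : ℝ} (hij : i ≤ j) (hjk : j < k)
    (h1 : density a w i j ≤ c) (h2 : density a w (j+1) k ≤ c) :
    density a w i k ≤ c := by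
  unfold density at *
  rw [sum_split a hij hjk, sum_split w hij hjk]
  exact mediant_le (Wpos w hw hij) (Wpos w hw (by omega)) h1 h2

lemma density_split_lt (hw : ∀ t, 0 < w t) {i j k : ℕ} {c : ℝ} (hij : i ≤ j) (hjk : j < k)
    (h1 : density a w i j < c) (h2 : density a w (j+1) k < c) :
    density a w i k < c := by
  unfold density at *
  rw [sum_split a hij hjk, sum_split w hij hjk]
  exact mediant_lt (Wpos w hw hij) (Wpos w hw (by omega)) h1 h2

lemma density_split_ge (hw : ∀ t, 0 < w t) {i j k : ℕ} {c : ℝ} (hij : i ≤ j) (hjk : j < k)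
    (h1 : c ≤ density a w i j) (h2 : c ≤ density a w (j+1) k) :
    c ≤ density a w i k := by
  unfold density at *
  rw [sum_split a hij hjk, sum_split w hij hjk]
  exact mediant_ge (Wpos w hw hij) (Wpos w hw (by omega)) h1 h2

lemma density_left_le (hw : ∀ t, 0 < w t) {i j k : ℕ} (hij : i ≤ j) (hjk : j < k)
    (h : density a w i j ≤ density a w (j+1) k) :
    density a w i j ≤ density a w i k :=
  density_split_ge a w hw hij hjk le_rfl h

lemma density_le_right (hw : ∀ t, 0 < w t) {i j k : ℕ} (hij : i ≤ j) (hjk : j < k)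
    (h : density a w i j ≤ density a w (j+1) k) :
    density a w i k ≤ density a w (j+1) k :=
  density_split_le a w hw hij hjk h le_rfl

lemma density_prefix_le (hw : ∀ t, 0 < w t) {i j k : ℕ} (hij : i ≤ j) (hjk : j ≤ k)
    (h : RightSkew a w i k) : density a w i j ≤ density a w i k := by
  rcases eq_or_lt_of_le hjk with rfl | hlt
  · exact le_rfl
  · exact density_left_le a w hw hij hlt (h j hij hlt)

lemma rightSkew_glue (hw : ∀ t, 0 < w t) {i j k : ℕ} (hij : i ≤ j) (hjk : j < k)
    (h1 : RightSkew a w i j) (h2 : RightSkew a w (j+1) k)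
    (hd : density a w i j ≤ density a w (j+1) k) : RightSkew a w i k := by
  intro m him hmk
  rcases lt_trichotomy m j with hm | rfl | hm
  · have ha : density a w i m ≤ density a w (m+1) j := h1 m him hm
    have hb : density a w i m ≤ density a w i j :=
      density_left_le a w hw him hm ha
    exact density_split_ge a w hw (by omega) hjk ha (hb.trans hd)
  · exact hd
  · have ha : density a w (j+1) m ≤ density a w (m+1) k := h2 m (by omega) hmk
    have hb : density a w (j+1) k ≤ density a w (m+1) k :=
      density_le_right a w hw (by omega) hmk ha
    exact density_split_le a w hw hij hm (hd.trans hb) ha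

lemma rightSkew_self (i : ℕ) : RightSkew a w i i := by
  intro j h1 h2; omega

end helpers

section lists
variable (a w : ℕ → ℝ)

abbrev DRel (a w : ℕ → ℝ) : ℕ × ℕ → ℕ × ℕ → Prop :=
  fun s t => t.1 = s.2 + 1 ∧ density a w t.1 t.2 < density a w s.1 s.2

lemma snd_le_last : ∀ (L : List (ℕ × ℕ)) (s : ℕ × ℕ) (e : ℕ),
    (∀ x ∈ L, x.1 ≤ x.2) → L.Chain' (DRel a w) →
    L.head? = some s → L.getLast?.map Prod.snd = some e → s.2 ≤ e := by
  intro L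
  induction L with
  | nil => intro s e _ _ h; simp at h
  | cons x rest ih =>
    intro s e hv hc hh hl
    simp only [List.head?_cons, Option.some.injEq] at hh
    subst hh
    match rest with
    | [] => simp at hl; omega
    | y :: rest' =>
      rw [show @List.Chain' = @List.IsChain from rfl, List.isChain_cons_cons] at hc
      have h1 : y.1 = x.2 + 1 := hc.1.1
      have h2 : y.1 ≤ y.2 := hv y (by simp)
      have h3 : y.2 ≤ e := by
        refine ih y e (fun x hx => hv x (by simp [hx])) hc.2 rfl ?_
        rwa [List.getLast?_cons_cons] at hl
      omega

lemma tail_lt (hw : ∀ t, 0 < w t) : ∀ (L : List (ℕ × ℕ)) (s : ℕ × ℕ) (e k' : ℕ) (c : ℝ),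
    (∀ x ∈ L, x.1 ≤ x.2 ∧ RightSkew a w x.1 x.2) → L.Chain' (DRel a w) →
    L.head? = some s → L.getLast?.map Prod.snd = some e →
    density a w s.1 s.2 < c → s.1 ≤ k' → k' ≤ e →
    density a w s.1 k' < c := by
  intro L
  induction L with
  | nil => intro s e k' c _ _ h; simp at h
  | cons x rest ih =>
    intro s e k' c hv hc hh hl hd hk1 hk2
    simp only [List.head?_cons, Option.some.injEq] at hh
    subst hh
    by_cases hcase : k' ≤ x.2
    · calc density a w x.1 k' ≤ density a w x.1 x.2 :=
            density_prefix_le a w hw hk1 hcase (hv x (by simp)).2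
        _ < c := hd
    · push_neg at hcase
      match rest with
      | [] => simp at hl; omega
      | y :: rest' =>
        rw [show @List.Chain' = @List.IsChain from rfl, List.isChain_cons_cons] at hc
        have h1 : y.1 = x.2 + 1 := hc.1.1
        have h2 : density a w y.1 y.2 < c := hc.1.2.trans hd
        have h3 : density a w (x.2+1) k' < c := by
          have := ih y e k' c (fun x hx => hv x (by simp [hx])) hc.2 rfl
            (by rwa [List.getLast?_cons_cons] at hl) h2 (by omega)
            hk2
          rwa [h1] at this
        have hs : x.1 ≤ x.2 := (hv x (by simp)).1
        exact density_split_lt a w hw hs hcase hd h3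

lemma exists_max_rs (n i : ℕ) (hin : i ≤ n) :
    ∃ p, i ≤ p ∧ p ≤ n ∧ RightSkew a w i p ∧
      ∀ k', i ≤ k' → k' ≤ n → RightSkew a w i k' → k' ≤ p := by
  classical
  set s := (Finset.Icc i n).filter (RightSkew a w i) with hs
  have hne : s.Nonempty := ⟨i, by
    simp only [hs, Finset.mem_filter, Finset.mem_Icc]
    exact ⟨⟨le_rfl, hin⟩, rightSkew_self a w i⟩⟩
  have hmem := s.max'_mem hne
  simp only [hs, Finset.mem_filter, Finset.mem_Icc] at hmem
  refine ⟨s.max' hne, hmem.1.1, hmem.1.2, hmem.2, fun k' h1 h2 h3 => ?_⟩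
  exact s.le_max' k' (by simp only [hs, Finset.mem_filter, Finset.mem_Icc]; exact ⟨⟨h1, h2⟩, h3⟩)

lemma exists_drsp (hw : ∀ t, 0 < w t) (n : ℕ) :
    ∀ d i pi, n - i ≤ d → i ≤ n → i ≤ pi → pi ≤ n → RightSkew a w i pi →
      (∀ k', i ≤ k' → k' ≤ n → RightSkew a w i k' → k' ≤ pi) →
      ∃ segs, IsDRSP a w i n segs ∧ segs.head? = some (i, pi) := by
  intro d
  induction d with
  | zero =>
    intro i pi hd hin hip hpn hrs _
    have h2 : pi = n := by omega
    exact ⟨[(i, pi)], ⟨by simp, by simp, by simp [h2], by simpa using ⟨hip, hrs⟩,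
      List.isChain_singleton _⟩, rfl⟩
  | succ d ih =>
    intro i pi hd hin hip hpn hrs hmax
    by_cases hpe : pi = n
    · subst hpe
      exact ⟨[(i, pi)], ⟨by simp, by simp, by simp, by simpa using ⟨hip, hrs⟩,
        List.isChain_singleton _⟩, rfl⟩
    · have hpn' : pi + 1 ≤ n := by omega
      obtain ⟨p', hp1, hp2, hp3, hp4⟩ := exists_max_rs a w n (pi+1) hpn'
      obtain ⟨segs', hdrsp', hhead'⟩ := ih (pi+1) p' (by omega) hpn' hp1 hp2 hp3 hp4
      have hlt : density a w (pi+1) p' < density a w i pi := by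
        by_contra hcon
        push_neg at hcon
        have hg : RightSkew a w i p' :=
          rightSkew_glue a w hw hip (by omega) hrs hp3 hcon
        have := hmax p' (by omega) hp2 hg
        omega
      obtain ⟨hne', hh', hl', hv', hc'⟩ := hdrsp'
      refine ⟨(i, pi) :: segs', ⟨by simp, by simp, ?_, ?_, ?_⟩, rfl⟩
      · obtain ⟨z, zs, rfl⟩ := List.exists_cons_of_ne_nil hne'
        rwa [List.getLast?_cons_cons]
      · intro x hx
        rcases List.mem_cons.1 hx with rfl | hx
        · exact ⟨hip, hrs⟩
        · exact hv' x hx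
      · rw [show @List.Chain' = @List.IsChain from rfl, List.isChain_cons]
        refine ⟨fun t ht => ?_, hc'⟩
        rw [hhead'] at ht
        cases ht
        exact ⟨rfl, hlt⟩

end lists

theorem first_block_iff_longest_rightSkew (a w : ℕ → ℝ) (hw : ∀ t, 0 < w t)
    (n i : ℕ) (hi : 1 ≤ i) (hin : i ≤ n) (pi : ℕ) :
    (∃ segs : List (ℕ × ℕ), IsDRSP a w i n segs ∧ segs.head? = some (i, pi)) ↔
    (i ≤ pi ∧ pi ≤ n ∧ RightSkew a w i pi ∧
      ∀ k', i ≤ k' → k' ≤ n → RightSkew a w i k' → k' ≤ pi) := by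
  constructor
  · rintro ⟨segs, ⟨hne, hh, hl, hv, hc⟩, hhead⟩
    obtain ⟨x, rest, rfl⟩ : ∃ x rest, segs = x :: rest := by
      cases segs with
      | nil => exact absurd rfl hne
      | cons x rest => exact ⟨x, rest, rfl⟩
    simp only [List.head?_cons, Option.some.injEq] at hhead
    subst hhead
    have hvh := hv (i, pi) (by simp)
    have hip : i ≤ pi := hvh.1
    have hpn : pi ≤ n := by
      have := snd_le_last a w ((i, pi) :: rest) (i, pi) n
        (fun x hx => (hv x hx).1) hc rfl hl
      simpa using this
    refine ⟨hip, hpn, hvh.2, fun k' hk1 hk2 hk3 => ?_⟩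
    by_contra hcon
    push_neg at hcon
    match rest with
    | [] =>
      simp only [List.getLast?_singleton, Option.map_some, Option.some.injEq] at hl
      omega
    | y :: rest' =>
      rw [show @List.Chain' = @List.IsChain from rfl, List.isChain_cons_cons] at hc
      have h1 : y.1 = pi + 1 := hc.1.1
      have h2 : density a w y.1 y.2 < density a w i pi := hc.1.2
      have h3 : density a w (pi+1) k' < density a w i pi := by
        have := tail_lt a w hw (y :: rest') y n k' (density a w i pi)
          (fun x hx => hv x (by simp [hx])) hc.2 rfl
          (by rwa [List.getLast?_cons_cons] at hl) h2 (by omega) hk2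
        rwa [h1] at this
      have h4 : density a w i pi ≤ density a w (pi+1) k' := hk3 pi hip hcon
      linarith
  · rintro ⟨hip, hpn, hrs, hmax⟩
    exact exists_drsp a w hw n (n - i) i pi le_rfl hin hip hpn hrs hmax
end
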